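/- arXiv:math/0502001 — 2 statements merged into one kernel-verified Lean document; each statement's English description precedes it below -/
import Mathlib

section
/- Let V be an n-dimensional real quadratic space, I ∈ Λ^n V a pseudoscalar, a ∈ V, and Y ∈ Λ V. Then the duality identity I(a ∧ Y) = (-1)^{n+1} a ⌟ (I Y) holds in the Clifford algebra Cl(V), where juxtaposition is the Clifford product and ⌟ is left contraction. -/
/- STATEMENT 3: In the Clifford algebra of an n-dimensional nondegenerate real quadratic
space, for any pseudoscalar I ∈ Λ^n V, any vector a and any multivector Y,
I (a ∧ Y) = (-1)^{n+1} a ⌟ (I Y), where juxtaposition is the Clifford product,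
a ∧ Y = ½(a Y + Ŷ a) is the exterior product by a vector and
a ⌟ Y = ½(a Y - Ŷ a) the left contraction by a vector. -/

noncomputable section
open CliffordAlgebra

variable {V : Type*} [AddCommGroup V] [Module ℝ V] (Q : QuadraticForm ℝ V)

/-- exterior product of a vector with a multivector inside the Clifford algebra. -/
def vWedge (a : V) (x : CliffordAlgebra Q) : CliffordAlgebra Q :=
  (2⁻¹ : ℝ) • (ι Q a * x + involute x * ι Q a)

/-- left contraction of a multivector by a vector inside the Clifford algebra. -/
def vLCont (a : V) (x : CliffordAlgebra Q) : CliffordAlgebra Q :=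
  (2⁻¹ : ℝ) • (ι Q a * x - involute x * ι Q a)

lemma list_comm_aux (v : V) (s : V → ℝ) : ∀ (L : List V),
    (∀ w ∈ L, ι Q v * ι Q w = s w • (ι Q w * ι Q v)) →
    ι Q v * (L.map (ι Q)).prod = (L.map s).prod • ((L.map (ι Q)).prod * ι Q v) := by
  intro L
  induction L with
  | nil => simp
  | cons w t ih =>
    intro h
    have hw := h w List.mem_cons_self
    have ht := ih (fun x hx => h x (List.mem_cons_of_mem _ hx))
    simp only [List.map_cons, List.prod_cons]
    calc ι Q v * (ι Q w * (t.map (ι Q)).prod)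
        = (ι Q v * ι Q w) * (t.map (ι Q)).prod := by rw [mul_assoc]
      _ = s w • (ι Q w * (ι Q v * (t.map (ι Q)).prod)) := by
          rw [hw, smul_mul_assoc, mul_assoc]
      _ = s w • (ι Q w * ((t.map s).prod • ((t.map (ι Q)).prod * ι Q v))) := by rw [ht]
      _ = (s w * (t.map s).prod) • (ι Q w * (t.map (ι Q)).prod * ι Q v) := by
          rw [mul_smul_comm, smul_smul, mul_assoc]


lemma involute_listmap_prod (L : List V) :
    involute (Q := Q) ((L.map (ι Q)).prod) = ((-1 : ℝ) ^ L.length) • (L.map (ι Q)).prod := by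
  induction L with
  | nil => simp
  | cons w t ih =>
    simp only [List.map_cons, List.prod_cons, map_mul, involute_ι, List.length_cons, ih]
    rw [mul_smul_comm, neg_mul, pow_succ]
    rw [mul_comm ((-1 : ℝ) ^ t.length) (-1 : ℝ), mul_smul, neg_one_smul, smul_neg]

theorem duality_identity
    {V : Type*} [AddCommGroup V] [Module ℝ V] [FiniteDimensional ℝ V]
    (Q : QuadraticForm ℝ V) (n : ℕ) (hn : n = Module.finrank ℝ V)
    (hQnd : (QuadraticMap.associated (R := ℝ) Q).Nondegenerate)
    (e : Module.Basis (Fin n) ℝ V)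
    (horth : ∀ i j, i ≠ j → QuadraticMap.polar Q (e i) (e j) = 0)
    -- I is a pseudoscalar (element of the one-dimensional top exterior power):
    (I : CliffordAlgebra Q) (hI : ∃ c : ℝ, I = c • (List.ofFn fun i => ι Q (e i)).prod)
    (a : V) (Y : CliffordAlgebra Q) :
    I * vWedge Q a Y = ((-1 : ℝ) ^ (n + 1)) • vLCont Q a (I * Y) := by
  classical
  obtain ⟨c, rfl⟩ := hI
  set P : CliffordAlgebra Q := (List.ofFn fun i => ι Q (e i)).prod with hP
  -- key anticommutation
  have key : ∀ b : V, ι Q b * P = ((-1 : ℝ) ^ (n + 1)) • (P * ι Q b) := by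
    have hlin : (LinearMap.mulRight ℝ P).comp (ι Q)
        = ((-1 : ℝ) ^ (n + 1)) • ((LinearMap.mulLeft ℝ P).comp (ι Q)) := by
      apply e.ext
      intro j
      simp only [LinearMap.comp_apply, LinearMap.smul_apply, LinearMap.mulRight_apply,
        LinearMap.mulLeft_apply]
      have hPmap : P = ((List.ofFn e).map (ι Q)).prod := by
        rw [hP, List.map_ofFn]; rfl
      have := list_comm_aux Q (e j) (fun w => if w = e j then (1 : ℝ) else -1)
        (List.ofFn e) ?_
      · rw [hPmap]
        rw [this]
        congr 1
        have : ((List.ofFn e).map fun w => if w = e j then (1 : ℝ) else -1).prod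
            = ∏ i : Fin n, (if e i = e j then (1 : ℝ) else -1) := by
          rw [List.map_ofFn]; exact Fin.prod_ofFn _
        rw [this]
        have heq : ∀ i : Fin n, (if e i = e j then (1 : ℝ) else -1)
            = if i = j then (1 : ℝ) else -1 := by
          intro i
          by_cases hij : i = j
          · simp [hij]
          · rw [if_neg hij, if_neg (fun h => hij (e.injective h))]
        rw [Finset.prod_congr rfl fun i _ => heq i]
        rw [← Finset.mul_prod_erase _ _ (Finset.mem_univ j), if_pos rfl, one_mul]
        rw [Finset.prod_congr rfl (fun i hi => if_neg (Finset.ne_of_mem_erase hi)),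
          Finset.prod_const, Finset.card_erase_of_mem (Finset.mem_univ j),
          Finset.card_univ, Fintype.card_fin]
        have hn1 : 1 ≤ n := by have := j.isLt; omega
        have : n + 1 = (n - 1) + 2 := by omega
        rw [this, pow_add]
        norm_num
      · intro w hw
        obtain ⟨i, rfl⟩ := Set.mem_range.mp (List.mem_ofFn.mp hw)
        by_cases hij : i = j
        · subst hij; rw [if_pos rfl, one_smul]
        · rw [if_neg (fun h => hij (e.injective h)), ι_mul_ι_comm,
            horth j i (Ne.symm hij), map_zero, zero_sub, neg_smul, one_smul]
    intro b
    have := congrArg (fun f => f b) hlin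
    simpa using this
  have key' : ∀ b : V, P * ι Q b = ((-1 : ℝ) ^ (n + 1)) • (ι Q b * P) := by
    intro b
    have hs : ((-1 : ℝ) ^ (n + 1)) * ((-1 : ℝ) ^ (n + 1)) = 1 := by
      rw [← pow_add]
      simp [pow_add, pow_mul, ← two_mul]
    rw [key b, smul_smul, hs, one_smul]
  -- involute of P
  have hinv : involute (Q := Q) P = ((-1 : ℝ) ^ n) • P := by
    have hPmap : P = ((List.ofFn e).map (ι Q)).prod := by
      rw [hP, List.map_ofFn]; rfl
    rw [hPmap, involute_listmap_prod Q (List.ofFn e)]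
    simp
  -- final computation
  simp only [vWedge, vLCont, map_mul, map_smul, hinv]
  have hassoc : P * ((ι Q) a * Y) = (P * ι Q a) * Y := (mul_assoc _ _ _).symm
  simp only [smul_mul_assoc, mul_smul_comm, mul_add, mul_sub, smul_add, smul_sub, smul_smul,
    mul_assoc]
  rw [show P * (ι Q a * Y) = (P * ι Q a) * Y from (mul_assoc _ _ _).symm, key' a,
    smul_mul_assoc, mul_assoc]
  have hsq : ((-1 : ℝ) ^ n) ^ 2 = 1 := by
    rw [← pow_mul, mul_comm, pow_mul]; norm_num
  match_scalars <;> ring_nf <;> simp [pow_mul, hsq]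
end
end

section
/- Let V be an n-dimensional real quadratic space with unit pseudoscalar τ, and define the standard Hodge operator ⋆: Λ V → Λ V by ⋆X = X̃ ⌟ τ (which equals the Clifford product X̃ τ). Then ⋆ is invertible with inverse ⋆⁻¹X = τ ⌞ X̃ (which equals τ X̃), where ⌞ is the right contraction, provided τ τ̃ = 1. -/
/- STATEMENT 4: For a unit pseudoscalar τ with τ τ̃ = 1 in the Clifford algebra of an
n-dimensional real quadratic space, the standard Hodge operator ⋆X = X̃ ⌟ τ (which
equals X̃ τ) is invertible with inverse ⋆⁻¹X = τ ⌞ X̃ (which equals τ X̃):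
⋆⁻¹(⋆X) = X and ⋆(⋆⁻¹X) = X for all X. -/

noncomputable section
open CliffordAlgebra

/-- grade-k projection of a Clifford algebra element, via the exterior grading. -/
def gproj {V : Type*} [AddCommGroup V] [Module ℝ V] (Q : QuadraticForm ℝ V)
    (k : ℕ) (x : CliffordAlgebra Q) : CliffordAlgebra Q :=
  (equivExterior Q).symm (GradedAlgebra.proj (fun i : ℕ => ⋀[ℝ]^i V) k (equivExterior Q x))

/-- left contraction of multivectors: `X ⌟ Y = Σ_{r,s} ⟨⟨X⟩_r ⟨Y⟩_s⟩_{s-r}`. -/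
def lcontr {V : Type*} [AddCommGroup V] [Module ℝ V] [FiniteDimensional ℝ V]
    (Q : QuadraticForm ℝ V) (x y : CliffordAlgebra Q) : CliffordAlgebra Q :=
  ∑ r ∈ Finset.range (Module.finrank ℝ V + 1), ∑ s ∈ Finset.range (Module.finrank ℝ V + 1),
    gproj Q (s - r) (gproj Q r x * gproj Q s y)

/-- right contraction of multivectors: `X ⌞ Y = Σ_{r,s} ⟨⟨X⟩_r ⟨Y⟩_s⟩_{r-s}`. -/
def rcontr {V : Type*} [AddCommGroup V] [Module ℝ V] [FiniteDimensional ℝ V]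
    (Q : QuadraticForm ℝ V) (x y : CliffordAlgebra Q) : CliffordAlgebra Q :=
  ∑ r ∈ Finset.range (Module.finrank ℝ V + 1), ∑ s ∈ Finset.range (Module.finrank ℝ V + 1),
    gproj Q (r - s) (gproj Q r x * gproj Q s y)

namespace HodgeAux4


variable {V : Type*} [AddCommGroup V] [Module ℝ V]
variable (Q : QuadraticForm ℝ V) {n : ℕ} (e : Module.Basis (Fin n) ℝ V)

/-- product of basis generators -/
def P (l : List (Fin n)) : CliffordAlgebra Q := (l.map fun i => ι Q (e i)).prod

@[simp] lemma P_nil : P Q e [] = 1 := rfl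
@[simp] lemma P_cons (i : Fin n) (l : List (Fin n)) :
    P Q e (i :: l) = ι Q (e i) * P Q e l := rfl
lemma P_append (l m : List (Fin n)) : P Q e (l ++ m) = P Q e l * P Q e m := by
  simp [P]

variable (horth : ∀ i j, i ≠ j → QuadraticMap.polar Q (e i) (e j) = 0)

include horth in
lemma anticomm {i j : Fin n} (h : i ≠ j) :
    ι Q (e i) * ι Q (e j) = -(ι Q (e j) * ι Q (e i)) := by
  have h1 := ι_mul_ι_add_swap (Q := Q) (e i) (e j)
  rw [horth i j h, map_zero] at h1
  exact eq_neg_of_add_eq_zero_left h1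

include horth in
lemma move (i : Fin n) : ∀ (l : List (Fin n)), i ∉ l →
    ι Q (e i) * P Q e l = ((-1 : ℝ)) ^ l.length • (P Q e l * ι Q (e i))
  | [], _ => by simp
  | j :: t, h => by
    have hij : i ≠ j := fun hh => h (hh ▸ List.mem_cons_self)
    have hit : i ∉ t := fun hh => h (List.mem_cons_of_mem _ hh)
    rw [P_cons, ← mul_assoc, anticomm Q e horth hij, neg_mul, mul_assoc,
      move i t hit, mul_smul_comm, ← neg_smul, List.length_cons, pow_succ, mul_assoc]
    congr 1
    ring

include horth in
lemma mul_blade (m : List (Fin n)) (i : Fin n) (hm : m.Nodup) (him : i ∈ m) :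
    ∃ (c : ℝ) (m' : List (Fin n)), m'.Nodup ∧ m'.toFinset = m.toFinset.erase i ∧
      ι Q (e i) * P Q e m = c • P Q e m' := by
  classical
  obtain ⟨l1, l2, rfl⟩ := List.append_of_mem him
  have hnd := hm
  rw [List.nodup_append] at hnd
  obtain ⟨h1, h2, h3⟩ := hnd
  have hi1 : i ∉ l1 := fun hh => h3 i hh i List.mem_cons_self rfl
  have hi2 : i ∉ l2 := (List.nodup_cons.mp h2).1
  have h2' : l2.Nodup := (List.nodup_cons.mp h2).2
  refine ⟨(-1 : ℝ) ^ l1.length * Q (e i), l1 ++ l2, ?_, ?_, ?_⟩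
  · rw [List.nodup_append]
    exact ⟨h1, h2', fun a ha b hb => h3 a ha b (List.mem_cons_of_mem _ hb)⟩
  · ext a
    simp only [List.toFinset_append, Finset.mem_union, List.mem_toFinset,
      Finset.mem_erase, List.toFinset_cons, Finset.mem_insert]
    constructor
    · rintro (ha | ha)
      · exact ⟨fun hh => hi1 (hh ▸ ha), Or.inl ha⟩
      · exact ⟨fun hh => hi2 (hh ▸ ha), Or.inr (Or.inr ha)⟩
    · rintro ⟨hne, (ha | ha | ha)⟩
      · exact Or.inl ha
      · exact absurd ha hne
      · exact Or.inr ha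
  · rw [P_append, P_append, P_cons, ← mul_assoc, move Q e horth i l1 hi1, smul_mul_assoc]
    have hmid : P Q e l1 * ι Q (e i) * (ι Q (e i) * P Q e l2)
        = algebraMap ℝ _ (Q (e i)) * (P Q e l1 * P Q e l2) := by
      rw [mul_assoc, ← mul_assoc (ι Q (e i)), ι_sq_scalar, ← mul_assoc, ← Algebra.commutes,
        mul_assoc]
    rw [hmid, ← Algebra.smul_def, smul_smul]

include horth in
lemma mul_univ (u : List (Fin n)) (hu : u.Nodup) (huu : ∀ i, i ∈ u) :
    ∀ (m : List (Fin n)), m.Nodup →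
    ∃ (c : ℝ) (m' : List (Fin n)), m'.Nodup ∧ m'.toFinset = m.toFinsetᶜ ∧
      P Q e m * P Q e u = c • P Q e m'
  | [], _ => ⟨1, u, hu, by
      ext a; simp [huu a], by simp⟩
  | i :: t, hm => by
    classical
    have hit : i ∉ t := (List.nodup_cons.mp hm).1
    have ht : t.Nodup := (List.nodup_cons.mp hm).2
    obtain ⟨c, m', hm', hmt, hmul⟩ := mul_univ u hu huu t ht
    have him' : i ∈ m' := by
      rw [← List.mem_toFinset, hmt, Finset.mem_compl, List.mem_toFinset]
      exact hit
    obtain ⟨c₂, m₂, hm₂, hmt₂, hmul₂⟩ := mul_blade Q e horth m' i hm' him'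
    refine ⟨c * c₂, m₂, hm₂, ?_, ?_⟩
    · rw [hmt₂, hmt, List.toFinset_cons, Finset.compl_insert]
    · rw [P_cons, mul_assoc, hmul, mul_smul_comm, hmul₂, ← smul_assoc]
      congr 1

lemma rev_P : ∀ (l : List (Fin n)), reverse (P Q e l) = P Q e l.reverse
  | [] => by simp
  | i :: t => by
    rw [P_cons, reverse.map_mul, reverse_ι, rev_P t, List.reverse_cons, P_append]
    simp [P]

lemma blade_mul_rev : ∀ (l : List (Fin n)),
    P Q e l * P Q e l.reverse = algebraMap ℝ _ ((l.map fun i => Q (e i)).prod)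
  | [] => by simp
  | i :: t => by
    rw [List.reverse_cons, P_append, P_cons]
    have h1 : P Q e [i] = ι Q (e i) := by simp [P]
    have h2 : ι Q (e i) * P Q e t * (P Q e t.reverse * P Q e [i])
        = ι Q (e i) * (P Q e t * P Q e t.reverse) * P Q e [i] := by
      simp only [mul_assoc]
    rw [h2, blade_mul_rev t, h1, ← Algebra.commutes, mul_assoc, ι_sq_scalar, ← map_mul]
    congr 1
    simp [mul_comm]

lemma rev_mul_blade : ∀ (l : List (Fin n)),
    P Q e l.reverse * P Q e l = algebraMap ℝ _ ((l.map fun i => Q (e i)).prod)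
  | [] => by simp
  | i :: t => by
    rw [List.reverse_cons, P_append]
    simp only [P_cons, P_nil, mul_one]
    have h2 : P Q e t.reverse * ι Q (e i) * (ι Q (e i) * P Q e t)
        = P Q e t.reverse * (ι Q (e i) * ι Q (e i)) * P Q e t := by
      simp only [mul_assoc]
    rw [h2, ι_sq_scalar]
    have h3 : P Q e t.reverse * algebraMap ℝ (CliffordAlgebra Q) (Q (e i)) * P Q e t
        = algebraMap ℝ (CliffordAlgebra Q) (Q (e i)) * (P Q e t.reverse * P Q e t) := by
      rw [← Algebra.commutes, mul_assoc]
    rw [h3, rev_mul_blade t, ← map_mul, List.map_cons, List.prod_cons]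

include horth in
lemma normal_form : ∀ (l : List (Fin n)), ∃ (c : ℝ) (m : List (Fin n)),
    m.Nodup ∧ P Q e l = c • P Q e m
  | [] => ⟨1, [], by simp⟩
  | i :: t => by
    classical
    obtain ⟨c, m, hm, hpt⟩ := normal_form t
    by_cases him : i ∈ m
    · obtain ⟨c₂, m₂, hm₂, _, hmul₂⟩ := mul_blade Q e horth m i hm him
      exact ⟨c * c₂, m₂, hm₂, by rw [P_cons, hpt, mul_smul_comm, hmul₂, ← smul_assoc]; congr 1⟩
    · exact ⟨c, i :: m, List.nodup_cons.mpr ⟨him, hm⟩, by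
        rw [P_cons, hpt, mul_smul_comm, ← P_cons]⟩

include horth in
lemma span_nodup_blades :
    Submodule.span ℝ {x : CliffordAlgebra Q | ∃ m : List (Fin n), m.Nodup ∧ x = P Q e m} = ⊤ := by
  classical
  rw [eq_top_iff]
  rintro x -
  set S : Set (CliffordAlgebra Q) :=
    {x : CliffordAlgebra Q | ∃ m : List (Fin n), m.Nodup ∧ x = P Q e m} with hS
  have hP : ∀ l : List (Fin n), P Q e l ∈ Submodule.span ℝ S := by
    intro l
    obtain ⟨c, m, hm, hpl⟩ := normal_form Q e horth l
    rw [hpl]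
    exact Submodule.smul_mem _ _ (Submodule.subset_span ⟨m, hm, rfl⟩)
  induction x using CliffordAlgebra.induction with
  | algebraMap r =>
    rw [Algebra.algebraMap_eq_smul_one]
    exact Submodule.smul_mem _ _ (by simpa using hP [])
  | ι v =>
    have hv : v = ∑ i, e.repr v i • e i := (e.sum_repr v).symm
    rw [hv, map_sum]
    refine Submodule.sum_mem _ fun i _ => ?_
    rw [map_smul]
    exact Submodule.smul_mem _ _ (by simpa [P] using hP [i])
  | mul a b ha hb =>
    have key : Submodule.span ℝ S * Submodule.span ℝ S ≤ Submodule.span ℝ S := by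
      rw [Submodule.span_mul_span]
      refine Submodule.span_le.mpr ?_
      rintro z hz
      rw [Set.mem_mul] at hz
      obtain ⟨x, hx, y, hy, rfl⟩ := hz
      obtain ⟨mx, _, rfl⟩ := hx
      obtain ⟨my, _, rfl⟩ := hy
      rw [← P_append]
      exact hP _
    exact key (Submodule.mul_mem_mul ha hb)
  | add a b ha hb => exact add_mem ha hb





def Pext (l : List (Fin n)) : ExteriorAlgebra ℝ V :=
  (l.map fun i => ExteriorAlgebra.ι ℝ (e i)).prod

@[simp] lemma Pext_nil : Pext e [] = 1 := rfl
@[simp] lemma Pext_cons (i : Fin n) (l : List (Fin n)) :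
    Pext e (i :: l) = ExteriorAlgebra.ι ℝ (e i) * Pext e l := rfl

lemma contr_zero (d : Module.Dual ℝ V) : ∀ (l : List (Fin n)),
    (∀ j ∈ l, d (e j) = 0) →
    contractLeft (Q := (0 : QuadraticForm ℝ V)) d (Pext e l) = 0
  | [], _ => by
    show contractLeft (Q := (0 : QuadraticForm ℝ V)) d 1 = 0
    rw [show (1 : ExteriorAlgebra ℝ V) = algebraMap ℝ _ 1 from (map_one _).symm,
      contractLeft_algebraMap]
  | i :: t, h => by
    show contractLeft (Q := (0 : QuadraticForm ℝ V)) d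
      (CliffordAlgebra.ι (0 : QuadraticForm ℝ V) (e i) * Pext e t) = 0
    rw [contractLeft_ι_mul, h i List.mem_cons_self, zero_smul, zero_sub,
      contr_zero d t (fun j hj => h j (List.mem_cons_of_mem _ hj)), mul_zero, neg_zero]

lemma Pext_mem : ∀ (l : List (Fin n)), Pext e l ∈ ⋀[ℝ]^l.length V
  | [] => by
    simp only [Pext_nil, List.length_nil, pow_zero]
    exact Submodule.one_le.mp le_rfl
  | i :: t => by
    have h0 : (⋀[ℝ]^(t.length + 1) V : Submodule ℝ (ExteriorAlgebra ℝ V)) =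
        LinearMap.range (ExteriorAlgebra.ι ℝ (M := V)) * ⋀[ℝ]^t.length V := pow_succ' _ _
    rw [Pext_cons, List.length_cons, h0]
    exact Submodule.mul_mem_mul (LinearMap.mem_range_self _ _) (Pext_mem t)

lemma gproj_eq_of_mem {j : ℕ} {x : CliffordAlgebra Q} (hx : equivExterior Q x ∈ ⋀[ℝ]^j V)
    (k : ℕ) : gproj Q k x = if k = j then x else 0 := by
  unfold gproj
  rw [GradedAlgebra.proj_apply]
  split_ifs with h
  · subst h
    rw [DirectSum.decompose_of_mem_same (ℳ := fun i : ℕ => ⋀[ℝ]^i V) hx,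
      LinearEquiv.symm_apply_apply]
  · rw [DirectSum.decompose_of_mem_ne (ℳ := fun i : ℕ => ⋀[ℝ]^i V) hx (Ne.symm h), map_zero]


include horth in
lemma bzero {i j : Fin n} (h : i ≠ j) :
    (QuadraticMap.associated (R := ℝ) (-Q)) (e i) (e j) = 0 := by
  have hp := horth i j h
  rw [QuadraticMap.associated_apply]
  have h0 : (-Q) (e i + e j) - (-Q) (e i) - (-Q) (e j) = 0 := by
    simp only [QuadraticMap.neg_apply]
    unfold QuadraticMap.polar at hp
    linarith
  rw [h0, smul_zero]

include horth in
lemma equivExterior_P : ∀ (l : List (Fin n)), l.Nodup →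
    equivExterior Q (P Q e l) = Pext e l
  | [], _ => by
    show changeForm changeForm.associated_neg_proof (P Q e []) = Pext e []
    rw [P_nil, Pext_nil]
    exact changeForm_one changeForm.associated_neg_proof
  | i :: t, h => by
    obtain ⟨hit, ht⟩ := List.nodup_cons.mp h
    rw [P_cons]
    show changeForm changeForm.associated_neg_proof (ι Q (e i) * P Q e t) = _
    rw [changeForm_ι_mul]
    have hIH : changeForm changeForm.associated_neg_proof (P Q e t) = Pext e t :=
      equivExterior_P t ht
    rw [hIH, contr_zero e _ t
        (fun j hj => bzero Q e horth (fun hh : i = j => hit (by rw [hh]; exact hj))),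
      sub_zero]
    rfl

include horth in
lemma gproj_P {l : List (Fin n)} (hl : l.Nodup) (k : ℕ) :
    gproj Q k (P Q e l) = if k = l.length then P Q e l else 0 := by
  have hmem := Pext_mem e l
  rw [← equivExterior_P Q e horth l hl] at hmem
  exact gproj_eq_of_mem Q hmem k

lemma gproj_smul (k : ℕ) (c : ℝ) (x : CliffordAlgebra Q) :
    gproj Q k (c • x) = c • gproj Q k x := by
  simp [gproj, map_smul]

@[simp] lemma gproj_zero (k : ℕ) : gproj Q k (0 : CliffordAlgebra Q) = 0 := by
  simp [gproj]


include horth in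
lemma univ_mul (u : List (Fin n)) (hu : u.Nodup) (huu : ∀ i, i ∈ u)
    (m : List (Fin n)) (hm : m.Nodup) :
    ∃ (c : ℝ) (m' : List (Fin n)), m'.Nodup ∧ m'.toFinset = m.toFinsetᶜ ∧
      P Q e u * P Q e m = c • P Q e m' := by
  obtain ⟨c, w, hw, hwt, hmul⟩ := mul_univ Q e horth u.reverse
    (List.nodup_reverse.mpr hu) (fun i => List.mem_reverse.mpr (huu i))
    m.reverse (List.nodup_reverse.mpr hm)
  refine ⟨c, w.reverse, List.nodup_reverse.mpr hw, ?_, ?_⟩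
  · rw [List.toFinset_reverse, hwt, List.toFinset_reverse]
  · have h2 : reverse (P Q e m.reverse * P Q e u.reverse) = reverse (c • P Q e w) := by
      rw [hmul]
    rw [reverse.map_mul, rev_P, rev_P, List.reverse_reverse, List.reverse_reverse,
      map_smul, rev_P] at h2
    exact h2

section FinDim
variable [FiniteDimensional ℝ V]

lemma lcontr_add_left (x y z : CliffordAlgebra Q) :
    lcontr Q (x + y) z = lcontr Q x z + lcontr Q y z := by
  simp only [lcontr, gproj, map_add, add_mul, Finset.sum_add_distrib]

lemma lcontr_smul_left (c : ℝ) (x z : CliffordAlgebra Q) :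
    lcontr Q (c • x) z = c • lcontr Q x z := by
  simp only [lcontr, gproj, map_smul, smul_mul_assoc, Finset.smul_sum]

lemma lcontr_zero_left (z : CliffordAlgebra Q) : lcontr Q 0 z = 0 := by
  simp [lcontr, gproj]

lemma rcontr_add_right (x y z : CliffordAlgebra Q) :
    rcontr Q z (x + y) = rcontr Q z x + rcontr Q z y := by
  simp only [rcontr, gproj, map_add, mul_add, Finset.sum_add_distrib]

lemma rcontr_smul_right (c : ℝ) (x z : CliffordAlgebra Q) :
    rcontr Q z (c • x) = c • rcontr Q z x := by
  simp only [rcontr, gproj, map_smul, mul_smul_comm, Finset.smul_sum]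

lemma rcontr_zero_right (z : CliffordAlgebra Q) : rcontr Q z 0 = 0 := by
  simp [rcontr, gproj]

lemma lcontr_pure {x y : CliffordAlgebra Q} {a b : ℕ}
    (hx : ∀ k, gproj Q k x = if k = a then x else 0)
    (hy : ∀ k, gproj Q k y = if k = b then y else 0)
    (ha : a ≤ Module.finrank ℝ V) (hb : b ≤ Module.finrank ℝ V) :
    lcontr Q x y = gproj Q (b - a) (x * y) := by
  unfold lcontr
  simp only [hx, hy]
  rw [Finset.sum_eq_single_of_mem a (Finset.mem_range.mpr (Nat.lt_succ_of_le ha))]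
  · rw [Finset.sum_eq_single_of_mem b (Finset.mem_range.mpr (Nat.lt_succ_of_le hb))]
    · simp
    · intro s _ hs
      simp [hs]
  · intro r _ hr
    simp [hr]

lemma rcontr_pure {x y : CliffordAlgebra Q} {a b : ℕ}
    (hx : ∀ k, gproj Q k x = if k = a then x else 0)
    (hy : ∀ k, gproj Q k y = if k = b then y else 0)
    (ha : a ≤ Module.finrank ℝ V) (hb : b ≤ Module.finrank ℝ V) :
    rcontr Q x y = gproj Q (a - b) (x * y) := by
  unfold rcontr
  simp only [hx, hy]
  rw [Finset.sum_eq_single_of_mem a (Finset.mem_range.mpr (Nat.lt_succ_of_le ha))]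
  · rw [Finset.sum_eq_single_of_mem b (Finset.mem_range.mpr (Nat.lt_succ_of_le hb))]
    · simp
    · intro s _ hs
      simp [hs]
  · intro r _ hr
    simp [hr]

end FinDim

end HodgeAux4

open HodgeAux4

theorem standard_hodge_invertible
    {V : Type*} [AddCommGroup V] [Module ℝ V] [FiniteDimensional ℝ V]
    (Q : QuadraticForm ℝ V) (n : ℕ) (hn : n = Module.finrank ℝ V)
    (hQnd : (QuadraticMap.associated (R := ℝ) Q).Nondegenerate)
    (e : Module.Basis (Fin n) ℝ V)
    (horth : ∀ i j, i ≠ j → QuadraticMap.polar Q (e i) (e j) = 0)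
    -- τ is a pseudoscalar normalized so that τ τ̃ = 1:
    (τ : CliffordAlgebra Q) (hτ : ∃ c : ℝ, τ = c • (List.ofFn fun i => ι Q (e i)).prod)
    (hunit : τ * reverse τ = 1)
    -- the Hodge operator ⋆X = X̃ ⌟ τ and its candidate inverse ⋆⁻¹X = τ ⌞ X̃ :
    (star starInv : CliffordAlgebra Q → CliffordAlgebra Q)
    (hstar : ∀ X, star X = lcontr Q (reverse X) τ)
    (hstarInv : ∀ X, starInv X = rcontr Q τ (reverse X)) :
    (∀ X, star X = reverse X * τ) ∧
    (∀ X, starInv X = τ * reverse X) ∧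
    (∀ X, starInv (star X) = X) ∧
    (∀ X, star (starInv X) = X) := by
  classical
  obtain ⟨c, hc⟩ := hτ
  set u : List (Fin n) := List.ofFn id with hu
  have hPu : (List.ofFn fun i => ι Q (e i)).prod = P Q e u := by
    simp [P, hu, List.map_ofFn, Function.comp]
  have hτ' : τ = c • P Q e u := by rw [hc, hPu]
  have hun : u.Nodup := List.nodup_ofFn.mpr (fun i j h => h)
  have hucov : ∀ i, i ∈ u := by
    intro i
    simp [hu, List.mem_ofFn]
  have hulen : u.length = n := by simp [hu]
  have hτpure : ∀ k, gproj Q k τ = if k = n then τ else 0 := by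
    intro k
    rw [hτ', gproj_smul, gproj_P Q e horth hun k, hulen]
    split_ifs <;> simp
  have hτlen : n ≤ Module.finrank ℝ V := le_of_eq hn
  have key : ∀ Y : CliffordAlgebra Q, lcontr Q Y τ = Y * τ ∧ rcontr Q τ Y = τ * Y := by
    have hblade : ∀ (m : List (Fin n)), m.Nodup →
        lcontr Q (P Q e m) τ = P Q e m * τ ∧ rcontr Q τ (P Q e m) = τ * P Q e m := by
      intro m hm
      have hlen : m.length ≤ Module.finrank ℝ V := by
        rw [← hn]
        simpa using hm.length_le_card
      have hxp : ∀ k, gproj Q k (P Q e m) = if k = m.length then P Q e m else 0 :=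
        gproj_P Q e horth hm
      constructor
      · rw [lcontr_pure Q hxp hτpure hlen hτlen]
        obtain ⟨c', m', hm', hmt, hmul⟩ := mul_univ Q e horth u hun hucov m hm
        have hmul2 : P Q e m * τ = (c * c') • P Q e m' := by
          rw [hτ', mul_smul_comm, hmul, smul_smul]
        have hlen' : m'.length = n - m.length := by
          rw [← List.toFinset_card_of_nodup hm', hmt, Finset.card_compl,
            List.toFinset_card_of_nodup hm, Fintype.card_fin]
        rw [hmul2, gproj_smul, gproj_P Q e horth hm', hlen', if_pos rfl]
      · rw [rcontr_pure Q hτpure hxp hτlen hlen]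
        obtain ⟨c', m', hm', hmt, hmul⟩ := univ_mul Q e horth u hun hucov m hm
        have hmul2 : τ * P Q e m = (c * c') • P Q e m' := by
          rw [hτ', smul_mul_assoc, hmul, smul_smul]
        have hlen' : m'.length = n - m.length := by
          rw [← List.toFinset_card_of_nodup hm', hmt, Finset.card_compl,
            List.toFinset_card_of_nodup hm, Fintype.card_fin]
        rw [hmul2, gproj_smul, gproj_P Q e horth hm', hlen', if_pos rfl]
    intro Y
    have hY : Y ∈ Submodule.span ℝ
        {x : CliffordAlgebra Q | ∃ m : List (Fin n), m.Nodup ∧ x = P Q e m} := by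
      rw [span_nodup_blades Q e horth]
      trivial
    induction hY using Submodule.span_induction with
    | mem x hx =>
      obtain ⟨m, hm, rfl⟩ := hx
      exact hblade m hm
    | zero =>
      exact ⟨by rw [lcontr_zero_left, zero_mul], by rw [rcontr_zero_right, mul_zero]⟩
    | add x y hx hy ihx ihy =>
      exact ⟨by rw [lcontr_add_left, ihx.1, ihy.1, add_mul],
             by rw [rcontr_add_right, ihx.2, ihy.2, mul_add]⟩
    | smul a x hx ih =>
      exact ⟨by rw [lcontr_smul_left, ih.1, smul_mul_assoc],
             by rw [rcontr_smul_right, ih.2, mul_smul_comm]⟩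
  have h1 : reverse τ * τ
      = c • (c • algebraMap ℝ (CliffordAlgebra Q) ((u.map fun i => Q (e i)).prod)) := by
    rw [hτ', map_smul, rev_P, smul_mul_assoc, mul_smul_comm, rev_mul_blade]
  have h2 : τ * reverse τ
      = c • (c • algebraMap ℝ (CliffordAlgebra Q) ((u.map fun i => Q (e i)).prod)) := by
    rw [hτ', map_smul, rev_P, smul_mul_assoc, mul_smul_comm, blade_mul_rev]
  have hunit' : reverse τ * τ = 1 := by rw [h1, ← h2, hunit]
  have hstar' : ∀ X, star X = reverse X * τ := fun X => by
    rw [hstar X, (key (reverse X)).1]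
  have hstarInv' : ∀ X, starInv X = τ * reverse X := fun X => by
    rw [hstarInv X, (key (reverse X)).2]
  refine ⟨hstar', hstarInv', ?_, ?_⟩
  · intro X
    rw [hstarInv', hstar' X, reverse.map_mul, reverse_reverse, ← mul_assoc,
      hunit, one_mul]
  · intro X
    rw [hstar', hstarInv' X, reverse.map_mul, reverse_reverse, mul_assoc, hunit', mul_one]
end
end
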